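/- For every linearly ordered continuum L and every ordinal α, the least ordinal β such that the lexicographic power L^α embeds into L^β is exactly α; i.e., L-dim(L^α) = α. -/

import Mathlib

/-- A compact line: every subset has a supremum and an infimum. -/
def CompactLine (K : Type*) [LinearOrder K] : Prop :=
  ∀ S : Set K, (∃ a, IsLUB S a) ∧ (∃ a, IsGLB S a)

section Aux

variable {L : Type} [LinearOrder L]

/-- The candidate supremum of a set in a lexicographic power, defined by
well-founded recursion on coordinates. -/
noncomputable def lexSupFun {ι : Type*} [LinearOrder ι] [WellFoundedLT ι]
    (hc : CompactLine L) (S : Set (Lex (ι → L))) : ι → L := fun i =>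
  (IsWellFounded.wf (r := ((· < ·) : ι → ι → Prop))).fix
    (fun i rec =>
      ((hc {l | ∃ z ∈ S, (∀ j, (hj : j < i) → ofLex z j = rec j hj) ∧ ofLex z i = l}).1).choose) i

lemma lexSupFun_spec {ι : Type*} [LinearOrder ι] [WellFoundedLT ι]
    (hc : CompactLine L) (S : Set (Lex (ι → L))) (i : ι) :
    IsLUB {l | ∃ z ∈ S, (∀ j, j < i → ofLex z j = lexSupFun hc S j) ∧ ofLex z i = l}
      (lexSupFun hc S i) := by
  have h := WellFounded.fix_eq (IsWellFounded.wf (r := ((· < ·) : ι → ι → Prop)))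
    (fun i rec =>
      ((hc {l | ∃ z ∈ S, (∀ j, (hj : j < i) → ofLex z j = rec j hj) ∧ ofLex z i = l}).1).choose) i
  have h2 := ((hc {l | ∃ z ∈ S,
      (∀ j, j < i → ofLex z j = lexSupFun hc S j) ∧ ofLex z i = l}).1).choose_spec
  rw [show lexSupFun hc S i = ((hc {l | ∃ z ∈ S,
      (∀ j, j < i → ofLex z j = lexSupFun hc S j) ∧ ofLex z i = l}).1).choose from h]
  exact h2

/-- Every subset of a lexicographic power of a compact line (over a well-ordered index)
has a least upper bound. -/
lemma lex_exists_isLUB {ι : Type*} [LinearOrder ι] [WellFoundedLT ι]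
    (hc : CompactLine L) (S : Set (Lex (ι → L))) : ∃ c, IsLUB S c := by
  set c0 : ι → L := lexSupFun hc S with hc0
  refine ⟨toLex c0, ?_, ?_⟩
  · -- upper bound
    intro z hz
    by_contra hlt
    obtain ⟨i, hag, hi⟩ : toLex c0 < z := not_le.mp hlt
    have hmem : ofLex z i ∈
        {l | ∃ w ∈ S, (∀ j, j < i → ofLex w j = lexSupFun hc S j) ∧ ofLex w i = l} :=
      ⟨z, hz, fun j hj => (hag j hj).symm, rfl⟩
    exact absurd ((lexSupFun_spec hc S i).1 hmem) (not_le.mpr hi)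
  · -- least
    intro b hb
    by_contra hlt
    obtain ⟨i, hag, hi⟩ : b < toLex c0 := not_le.mp hlt
    obtain ⟨l, ⟨w, hwS, hwag, hwi⟩, hbl, -⟩ := (lexSupFun_spec hc S i).exists_between hi
    have hbw : b < w := by
      refine ⟨i, fun j hj => ?_, ?_⟩
      · exact (hag j hj).trans (hwag j hj).symm
      · exact lt_of_lt_of_eq hbl hwi.symm
    exact absurd (hb hwS) (not_le.mpr hbw)

end Aux

section Key

variable {L : Type} [LinearOrder L]

/-- The key lemma: if `β < α` then `L^α` does not order-embed into `L^β`. -/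
lemma key_no_embedding [Nontrivial L] (hc : CompactLine L) (hd : DenselyOrdered L)
    {α β : Ordinal} (hβ : β < α) (e : Lex (α.ToType → L) ↪o Lex (β.ToType → L)) : False := by
  classical
  -- bottom and top of L
  obtain ⟨bt, hbt⟩ := (hc Set.univ).2
  obtain ⟨tp, htp⟩ := (hc Set.univ).1
  have hbot : ∀ x : L, bt ≤ x := fun x => hbt.1 (Set.mem_univ x)
  have htop : ∀ x : L, x ≤ tp := fun x => htp.1 (Set.mem_univ x)
  have hbtp : bt < tp := by
    obtain ⟨x, y, hxy⟩ := exists_pair_ne L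
    rcases lt_or_gt_of_ne hxy with h | h
    · exact lt_of_le_of_lt (hbot x) (lt_of_lt_of_le h (htop y))
    · exact lt_of_le_of_lt (hbot y) (lt_of_lt_of_le h (htop x))
  -- ranks
  set rkα : α.ToType → Ordinal := fun i => (((Ordinal.ToType.mk (o := α)).symm i : Set.Iio α) : Ordinal)
    with hrkα
  set rkβ : β.ToType → Ordinal := fun i => (((Ordinal.ToType.mk (o := β)).symm i : Set.Iio β) : Ordinal)
    with hrkβ
  have rkα_lt : ∀ i j : α.ToType, i < j ↔ rkα i < rkα j := by
    intro i j
    rw [hrkα]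
    simp only []
    rw [Subtype.coe_lt_coe]
    exact (OrderIso.lt_iff_lt _).symm
  have rkβ_lt : ∀ i j : β.ToType, i < j ↔ rkβ i < rkβ j := by
    intro i j
    rw [hrkβ]
    simp only []
    rw [Subtype.coe_lt_coe]
    exact (OrderIso.lt_iff_lt _).symm
  have rkα_enum : ∀ (v : Ordinal) (hv : v < α), rkα ((Ordinal.ToType.mk (o := α)) ⟨v, hv⟩) = v := by
    intro v hv; rw [hrkα]; simp
  have rkβ_lt_self : ∀ i : β.ToType, rkβ i < β := fun i => ((Ordinal.ToType.mk (o := β)).symm i).2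
  have enum_rkβ : ∀ (i : β.ToType) (h : rkβ i < β), (Ordinal.ToType.mk (o := β)) ⟨rkβ i, h⟩ = i := by
    intro i h
    have h2 : (⟨rkβ i, h⟩ : Set.Iio β) = (Ordinal.ToType.mk (o := β)).symm i := Subtype.ext rfl
    rw [h2, OrderIso.apply_symm_apply]
  -- the extension map
  set g : (β.ToType → L) → L → (α.ToType → L) := fun x t i =>
    if h : rkα i < β then x ((Ordinal.ToType.mk (o := β)) ⟨rkα i, h⟩)
    else if rkα i = β then t else bt with hg
  set iβ : α.ToType := (Ordinal.ToType.mk (o := α)) ⟨β, hβ⟩ with hiβ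
  have hrkiβ : rkα iβ = β := rkα_enum β hβ
  -- Claim A : appending ⊥ is lex-smaller than appending ⊤
  have claimA : ∀ x : β.ToType → L, toLex (g x bt) < toLex (g x tp) := by
    intro x
    refine ⟨iβ, fun j hj => ?_, ?_⟩
    · have hj' : rkα j < β := by rw [← hrkiβ]; exact (rkα_lt j iβ).mp hj
      simp only [Pi.toLex_apply, hg, dif_pos hj']
    · simp only [Pi.toLex_apply, hg, hrkiβ, lt_self_iff_false, dite_false, ite_true]
      exact hbtp
  -- Claim B : the extension respects strict inequalities strongly
  have claimB : ∀ x y : β.ToType → L, toLex x < toLex y →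
      toLex (g x tp) < toLex (g y bt) := by
    rintro x y ⟨i0, hag, hi0⟩
    have hrk0 : rkβ i0 < β := rkβ_lt_self i0
    set i1 : α.ToType := (Ordinal.ToType.mk (o := α)) ⟨rkβ i0, lt_trans hrk0 hβ⟩ with hi1
    have hrki1 : rkα i1 = rkβ i0 := rkα_enum _ _
    refine ⟨i1, fun j hj => ?_, ?_⟩
    · have hjlt : rkα j < rkβ i0 := by rw [← hrki1]; exact (rkα_lt j i1).mp hj
      have hjβ : rkα j < β := lt_trans hjlt hrk0
      have hk : (Ordinal.ToType.mk (o := β)) ⟨rkα j, hjβ⟩ < i0 := by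
        rw [rkβ_lt]
        rw [show rkβ ((Ordinal.ToType.mk (o := β)) ⟨rkα j, hjβ⟩) = rkα j by rw [hrkβ]; simp]
        exact hjlt
      simp only [Pi.toLex_apply, hg, dif_pos hjβ]
      exact hag _ hk
    · have h1 : rkα i1 < β := by rw [hrki1]; exact hrk0
      simp only [Pi.toLex_apply, hg, dif_pos h1]
      have h2 : (Ordinal.ToType.mk (o := β)) ⟨rkα i1, h1⟩ = i0 := by
        rw [show (⟨rkα i1, h1⟩ : Set.Iio β) = ⟨rkβ i0, hrk0⟩ from Subtype.ext hrki1]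
        exact enum_rkβ i0 hrk0
      rw [h2]
      exact hi0
  -- the two maps
  set u : Lex (β.ToType → L) → Lex (β.ToType → L) :=
    fun x => e (toLex (g (ofLex x) bt)) with hu
  set v : Lex (β.ToType → L) → Lex (β.ToType → L) :=
    fun x => e (toLex (g (ofLex x) tp)) with hv
  have huv : ∀ x, u x < v x := fun x => e.lt_iff_lt.mpr (claimA (ofLex x))
  have hvu : ∀ x y, x < y → v x < u y := fun x y h =>
    e.lt_iff_lt.mpr (claimB (ofLex x) (ofLex y) h)
  have umono : ∀ x y, x ≤ y → u x ≤ u y := by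
    intro x y h
    rcases eq_or_lt_of_le h with rfl | h
    · exact le_rfl
    · exact le_of_lt (lt_trans (huv x) (hvu x y h))
  -- density of the lex power
  haveI := hd
  have densX : ∀ p q : Lex (β.ToType → L), p < q → ∃ z, p < z ∧ z < q := by
    rintro p q ⟨i, hag, hi⟩
    obtain ⟨m, hm1, hm2⟩ := exists_between hi
    refine ⟨toLex (Function.update (ofLex p) i m),
      ⟨i, fun j hj => ?_, ?_⟩, ⟨i, fun j hj => ?_, ?_⟩⟩
    · simp [Function.update_of_ne hj.ne]
    · simpa using hm1
    · simp only [Pi.toLex_apply, Function.update_of_ne hj.ne]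
      exact hag j hj
    · simpa using hm2
  -- the fixed point argument
  set F : Set (Lex (β.ToType → L)) := {x | x ≤ u x} with hF
  obtain ⟨c, hcub, hclub⟩ := lex_exists_isLUB (ι := β.ToType) hc F
  have hcuc : c ≤ u c := by
    apply hclub
    intro z hz
    exact le_trans hz (umono z c (hcub hz))
  have hcvc : c < v c := lt_of_le_of_lt hcuc (huv c)
  obtain ⟨b, hb1, hb2⟩ := densX c (v c) hcvc
  have hbF : b ∉ F := fun hbF => absurd (hcub hbF) (not_le.mpr hb1)
  have hub : u b < b := not_le.mp hbF
  exact absurd (lt_trans (hvu c b hb1) (lt_trans hub hb2)) (lt_irrefl (v c))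

end Key

theorem stmt13 (L : Type) [LinearOrder L] [Nontrivial L]
    (hc : CompactLine L) (hd : DenselyOrdered L) (α : Ordinal) :
    sInf {β : Ordinal |
      Nonempty (Lex (α.ToType → L) ↪o Lex (β.ToType → L))} = α := by
  have hmem : α ∈ {β : Ordinal |
      Nonempty (Lex (α.ToType → L) ↪o Lex (β.ToType → L))} :=
    ⟨(OrderIso.refl _).toOrderEmbedding⟩
  refine le_antisymm (csInf_le' hmem) (le_csInf ⟨α, hmem⟩ ?_)
  rintro β ⟨e⟩
  by_contra hlt
  push_neg at hlt
  exact key_no_embedding hc hd hlt e
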